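/- Let A be an n × n matrix with nonnegative real entries of block upper-triangular form A = [[B, R],[0, C]], where B is a k × k block and C is an ℓ × ℓ block (k + ℓ = n) and R is an arbitrary k × ℓ nonnegative block. Then sm(A) does not depend on R; that is, sm(A) equals sm(A₀), where A₀ is the matrix obtained from A by replacing R with the zero block. -/

import Mathlib

open scoped BigOperators Kronecker
open Matrix

/-- The permanent of a square real matrix. -/
noncomputable def perm {ι : Type*} [Fintype ι] [DecidableEq ι] (A : Matrix ι ι ℝ) : ℝ :=
  ∑ σ : Equiv.Perm ι, ∏ i, A i (σ i)

/-- The permanental mean `pm A = (per A / n!) ^ (1/n)`. -/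
noncomputable def pm {ι : Type*} [Fintype ι] [DecidableEq ι] (A : Matrix ι ι ℝ) : ℝ :=
  (perm A / (Nat.factorial (Fintype.card ι) : ℝ)) ^ ((Fintype.card ι : ℝ)⁻¹)

/-- The geometric mean of the entries of a vector. -/
noncomputable def gmVec {ι : Type*} [Fintype ι] (v : ι → ℝ) : ℝ :=
  (∏ i, v i) ^ ((Fintype.card ι : ℝ)⁻¹)

/-- The set of values whose infimum defines the scaling mean. -/
noncomputable def smSet {ι κ : Type*} [Fintype ι] [Fintype κ] (A : Matrix ι κ ℝ) : Set ℝ :=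
  {r : ℝ | ∃ x : ι → ℝ, ∃ y : κ → ℝ, (∀ i, 0 < x i) ∧ (∀ j, 0 < y j) ∧
    r = (∑ i, ∑ j, x i * A i j * y j) / (gmVec x * gmVec y)}

/-- The scaling mean `sm A = (1/(mn)) · inf over positive vectors x, y of xᵀAy/(gm x · gm y)`. -/
noncomputable def sm {ι κ : Type*} [Fintype ι] [Fintype κ] (A : Matrix ι κ ℝ) : ℝ :=
  ((Fintype.card ι : ℝ) * (Fintype.card κ : ℝ))⁻¹ * sInf (smSet A)

lemma gmVec_pos {ι : Type*} [Fintype ι] {v : ι → ℝ} (hv : ∀ i, 0 < v i) : 0 < gmVec v :=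
  Real.rpow_pos_of_pos (Finset.prod_pos fun i _ => hv i) _

lemma smSet_nonempty {ι κ : Type*} [Fintype ι] [Fintype κ] (A : Matrix ι κ ℝ) :
    (smSet A).Nonempty :=
  ⟨_, fun _ => (1:ℝ), fun _ => (1:ℝ), fun _ => one_pos, fun _ => one_pos, rfl⟩

lemma smSet_bddBelow {ι κ : Type*} [Fintype ι] [Fintype κ] (A : Matrix ι κ ℝ)
    (hA : ∀ i j, 0 ≤ A i j) : BddBelow (smSet A) := by
  refine ⟨0, ?_⟩
  rintro r ⟨x, y, hx, hy, rfl⟩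
  apply div_nonneg
  · exact Finset.sum_nonneg fun i _ => Finset.sum_nonneg fun j _ =>
      mul_nonneg (mul_nonneg (hx i).le (hA i j)) (hy j).le
  · exact (mul_pos (gmVec_pos hx) (gmVec_pos hy)).le

lemma num_split {k l : ℕ} (B : Matrix (Fin k) (Fin k) ℝ) (R : Matrix (Fin k) (Fin l) ℝ)
    (C : Matrix (Fin l) (Fin l) ℝ) (x₁ y₁ : Fin k → ℝ) (x₂ y₂ : Fin l → ℝ) :
    ∑ i, ∑ j, (Sum.elim x₁ x₂ i) * (fromBlocks B R 0 C) i j * (Sum.elim y₁ y₂ j)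
    = (∑ i, ∑ j, x₁ i * B i j * y₁ j) + (∑ i, ∑ j, x₁ i * R i j * y₂ j)
      + (∑ i, ∑ j, x₂ i * C i j * y₂ j) := by
  simp [Fintype.sum_sum_type, Finset.sum_add_distrib]
  ring

lemma gm_scale {k l : ℕ} (t : ℝ) (ht : 0 < t) (x₁ : Fin k → ℝ) (x₂ : Fin l → ℝ)
    (h1 : ∀ i, 0 < x₁ i) (h2 : ∀ i, 0 < x₂ i) :
    gmVec (Sum.elim (fun i => t * x₁ i) x₂)
      = ((t ^ k : ℝ)) ^ ((Fintype.card (Fin k ⊕ Fin l) : ℝ)⁻¹) * gmVec (Sum.elim x₁ x₂) := by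
  have hp1 : 0 ≤ ∏ i, x₁ i := Finset.prod_nonneg fun i _ => (h1 i).le
  have hp2 : 0 ≤ ∏ i, x₂ i := Finset.prod_nonneg fun i _ => (h2 i).le
  unfold gmVec
  rw [Fintype.prod_sum_type, Fintype.prod_sum_type]
  simp only [Sum.elim_inl, Sum.elim_inr, Finset.prod_mul_distrib, Finset.prod_const]
  rw [Finset.card_univ, Fintype.card_fin, mul_assoc,
    Real.mul_rpow (by positivity) (by positivity)]

lemma key {k l : ℕ} (B : Matrix (Fin k) (Fin k) ℝ) (R : Matrix (Fin k) (Fin l) ℝ)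
    (C : Matrix (Fin l) (Fin l) ℝ) (t : ℝ) (ht : 0 < t)
    (x₁ y₁ : Fin k → ℝ) (x₂ y₂ : Fin l → ℝ)
    (hx₁ : ∀ i, 0 < x₁ i) (hx₂ : ∀ i, 0 < x₂ i) (hy₁ : ∀ i, 0 < y₁ i) (hy₂ : ∀ i, 0 < y₂ i) :
    (∑ i, ∑ j, (Sum.elim (fun i => t * x₁ i) x₂ i) * (fromBlocks B R 0 C) i j
        * (Sum.elim (fun j => t⁻¹ * y₁ j) y₂ j))
      / (gmVec (Sum.elim (fun i => t * x₁ i) x₂) * gmVec (Sum.elim (fun j => t⁻¹ * y₁ j) y₂))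
    = ((∑ i, ∑ j, (Sum.elim x₁ x₂ i) * (fromBlocks B 0 0 C) i j * (Sum.elim y₁ y₂ j))
        + t * (∑ i, ∑ j, x₁ i * R i j * y₂ j))
      / (gmVec (Sum.elim x₁ x₂) * gmVec (Sum.elim y₁ y₂)) := by
  have htt : t * t⁻¹ = 1 := mul_inv_cancel₀ ht.ne'
  -- denominator
  have hden : gmVec (Sum.elim (fun i => t * x₁ i) x₂) * gmVec (Sum.elim (fun j => t⁻¹ * y₁ j) y₂)
      = gmVec (Sum.elim x₁ x₂) * gmVec (Sum.elim y₁ y₂) := by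
    rw [gm_scale t ht x₁ x₂ hx₁ hx₂, gm_scale t⁻¹ (inv_pos.mpr ht) y₁ y₂ hy₁ hy₂]
    rw [inv_pow, Real.inv_rpow (by positivity)]
    set a := ((t ^ k : ℝ)) ^ ((Fintype.card (Fin k ⊕ Fin l) : ℝ)⁻¹) with ha
    have ha0 : a ≠ 0 := (Real.rpow_pos_of_pos (pow_pos ht k) _).ne'
    field_simp
  rw [hden, num_split, num_split]
  congr 1
  simp only [Matrix.zero_apply, mul_zero, zero_mul, Finset.sum_const_zero, add_zero]
  have h1 : ∑ i, ∑ j, (t * x₁ i) * B i j * (t⁻¹ * y₁ j) = ∑ i, ∑ j, x₁ i * B i j * y₁ j := by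
    refine Finset.sum_congr rfl fun i _ => Finset.sum_congr rfl fun j _ => ?_
    rw [show (t * x₁ i) * B i j * (t⁻¹ * y₁ j) = (t * t⁻¹) * (x₁ i * B i j * y₁ j) by ring,
      htt, one_mul]
  have h2 : ∑ i, ∑ j, (t * x₁ i) * R i j * y₂ j = t * ∑ i, ∑ j, x₁ i * R i j * y₂ j := by
    rw [Finset.mul_sum]
    refine Finset.sum_congr rfl fun i _ => ?_
    rw [Finset.mul_sum]
    exact Finset.sum_congr rfl fun j _ => by ring
  rw [h1, h2]
  ring

lemma sInf_smSet_eq {k l : ℕ} (B : Matrix (Fin k) (Fin k) ℝ) (R : Matrix (Fin k) (Fin l) ℝ)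
    (C : Matrix (Fin l) (Fin l) ℝ)
    (hB : ∀ i j, 0 ≤ B i j) (hR : ∀ i j, 0 ≤ R i j) (hC : ∀ i j, 0 ≤ C i j) :
    sInf (smSet (Matrix.fromBlocks B R 0 C)) = sInf (smSet (Matrix.fromBlocks B 0 0 C)) := by
  have hA : ∀ i j, 0 ≤ fromBlocks B R 0 C i j := by
    rintro (i | i) (j | j) <;> simp [fromBlocks, hB, hR, hC]
  have hA0 : ∀ i j, 0 ≤ fromBlocks B (0 : Matrix (Fin k) (Fin l) ℝ) 0 C i j := by
    rintro (i | i) (j | j) <;> simp [fromBlocks, hB, hC]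
  have hle : ∀ i j, fromBlocks B (0 : Matrix (Fin k) (Fin l) ℝ) 0 C i j
      ≤ fromBlocks B R 0 C i j := by
    rintro (i | i) (j | j) <;> simp [fromBlocks, hR]
  refine le_antisymm ?_ ?_
  · -- sInf A ≤ sInf A₀
    refine le_csInf (smSet_nonempty _) ?_
    rintro r ⟨x, y, hx, hy, rfl⟩
    set x₁ : Fin k → ℝ := fun i => x (Sum.inl i) with hx₁def
    set x₂ : Fin l → ℝ := fun i => x (Sum.inr i) with hx₂def
    set y₁ : Fin k → ℝ := fun i => y (Sum.inl i) with hy₁def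
    set y₂ : Fin l → ℝ := fun i => y (Sum.inr i) with hy₂def
    have hxe : Sum.elim x₁ x₂ = x := by funext i; cases i <;> rfl
    have hye : Sum.elim y₁ y₂ = y := by funext i; cases i <;> rfl
    rw [← hxe, ← hye]
    apply le_of_forall_pos_le_add
    intro ε hε
    set D := gmVec (Sum.elim x₁ x₂) * gmVec (Sum.elim y₁ y₂) with hD
    have hDpos : 0 < D := by
      rw [hD, hxe, hye]; exact mul_pos (gmVec_pos hx) (gmVec_pos hy)
    set S := ∑ i, ∑ j, x₁ i * R i j * y₂ j with hS
    have hSnn : 0 ≤ S := Finset.sum_nonneg fun i _ => Finset.sum_nonneg fun j _ =>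
      mul_nonneg (mul_nonneg (hx _).le (hR i j)) (hy _).le
    set t := ε * D / (S + 1) with htdef
    have ht : 0 < t := by positivity
    have hmem : ((∑ i, ∑ j, (Sum.elim x₁ x₂ i) * (fromBlocks B 0 0 C) i j * (Sum.elim y₁ y₂ j))
        + t * S) / D ∈ smSet (fromBlocks B R 0 C) := by
      refine ⟨Sum.elim (fun i => t * x₁ i) x₂, Sum.elim (fun j => t⁻¹ * y₁ j) y₂,
        ?_, ?_, ?_⟩
      · rintro (i | i)
        · exact mul_pos ht (hx _)
        · exact hx _
      · rintro (j | j)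
        · exact mul_pos (inv_pos.mpr ht) (hy _)
        · exact hy _
      · rw [key B R C t ht x₁ y₁ x₂ y₂ (fun i => hx _) (fun i => hx _) (fun i => hy _)
          (fun i => hy _)]
    refine (csInf_le (smSet_bddBelow _ hA) hmem).trans ?_
    rw [add_div]
    gcongr
    have : t * S / D = ε * (S / (S + 1)) := by
      rw [htdef]; field_simp
    rw [this]
    calc ε * (S / (S + 1)) ≤ ε * 1 := by
          gcongr
          rw [div_le_one (by positivity)]; linarith
      _ = ε := mul_one ε
  · -- sInf A₀ ≤ sInf A
    refine le_csInf (smSet_nonempty _) ?_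
    rintro r ⟨x, y, hx, hy, rfl⟩
    refine (csInf_le (smSet_bddBelow _ hA0) ⟨x, y, hx, hy, rfl⟩).trans ?_
    gcongr
    all_goals first
      | exact (mul_pos (gmVec_pos hx) (gmVec_pos hy)).le
      | exact (hx _).le
      | exact (hy _).le
      | apply hle

/-- The scaling mean of a block upper-triangular nonnegative matrix
`[[B, R], [0, C]]` does not depend on `R`. -/
theorem stmt_7 {k l : ℕ} (B : Matrix (Fin k) (Fin k) ℝ) (R : Matrix (Fin k) (Fin l) ℝ)
    (C : Matrix (Fin l) (Fin l) ℝ)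
    (hB : ∀ i j, 0 ≤ B i j) (hR : ∀ i j, 0 ≤ R i j) (hC : ∀ i j, 0 ≤ C i j) :
    sm (Matrix.fromBlocks B R 0 C) = sm (Matrix.fromBlocks B 0 0 C) := by
  unfold sm
  rw [sInf_smSet_eq B R C hB hR hC]
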